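/- Let k be a field and s ≥ 2. In R = k[x_0,...,x_{2s−1}] let I = I(L_1) ∩ ... ∩ I(L_s) be the ideal of the s pairwise disjoint coordinate lines of P^{2s−1} with I(L_i) = (x_j : j ∉ {2i−2, 2i−1}), and let I^(m) = I(L_1)^m ∩ ... ∩ I(L_s)^m. In S = k[y_0,...,y_{s−1}] let J = J(p_0) ∩ ... ∩ J(p_{s−1}) be the ideal of the s coordinate points of P^{s−1}, where J(p_i) = (y_j : j ≠ i), and let J^(m) = J(p_0)^m ∩ ... ∩ J(p_{s−1})^m. Then for all positive integers m and r, I^(m) ⊆ I^r if and only if J^(m) ⊆ J^r; consequently ρ(I) = ρ(J). -/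

import Mathlib

open MvPolynomial Filter

/-- A homogeneous ideal of the polynomial ring: an ideal closed under taking
homogeneous components. -/
def IsHomogIdeal {k : Type*} [CommSemiring k] {σ : Type*} (I : Ideal (MvPolynomial σ k)) : Prop :=
  ∀ f ∈ I, ∀ d : ℕ, MvPolynomial.homogeneousComponent d f ∈ I

/-- `α(I)`: the least degree of a nonzero element of `I`. -/
noncomputable def alphaDeg {k : Type*} [CommSemiring k] {σ : Type*}
    (I : Ideal (MvPolynomial σ k)) : ℕ :=
  sInf {d | ∃ f ∈ I, f ≠ 0 ∧ f.totalDegree = d}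

/-- The `m`-th symbolic power of `I`: the intersection, over the associated primes `P`
of `I` (i.e. of `R ⧸ I`), of the contractions `I^m R_P ∩ R`. -/
noncomputable def symbolicPower {R : Type*} [CommRing R] (I : Ideal R) (m : ℕ) : Ideal R :=
  ⨅ P : {P : Ideal R // P ∈ associatedPrimes R (R ⧸ I)},
    letI : P.1.IsPrime := IsAssociatedPrime.isPrime P.2
    (Ideal.map (algebraMap R (Localization.AtPrime P.1)) (I ^ m)).comap
      (algebraMap R (Localization.AtPrime P.1))

/-- The resurgence `ρ(I) = sup {m/r : sp m ⊄ I^r}`, stated relative to a given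
symbolic power function `sp`. -/
noncomputable def resurgence {R : Type*} [CommRing R] (I : Ideal R) (sp : ℕ → Ideal R) : ℝ :=
  sSup {x : ℝ | ∃ m r : ℕ, 0 < m ∧ 0 < r ∧ ¬ sp m ≤ I ^ r ∧ x = (m : ℝ) / r}

/-- The asymptotic resurgence `ρ_a(I) = sup {m/r : sp (mt) ⊄ I^{rt} for all t ≫ 0}`. -/
noncomputable def asymResurgence {R : Type*} [CommRing R] (I : Ideal R) (sp : ℕ → Ideal R) : ℝ :=
  sSup {x : ℝ | ∃ m r : ℕ, 0 < m ∧ 0 < r ∧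
    (∀ᶠ t : ℕ in atTop, ¬ sp (m * t) ≤ I ^ (r * t)) ∧ x = (m : ℝ) / r}

/-- `ρ(I,t) = sup {m/r : sp m ⊄ I^r, m ≥ t, r ≥ t}`. -/
noncomputable def resurgenceFrom {R : Type*} [CommRing R] (I : Ideal R) (sp : ℕ → Ideal R)
    (t : ℕ) : ℝ :=
  sSup {x : ℝ | ∃ m r : ℕ, 0 < m ∧ 0 < r ∧ t ≤ m ∧ t ≤ r ∧ ¬ sp m ≤ I ^ r ∧ x = (m : ℝ) / r}

/-- `ρ'_a(I) = limsup_{t → ∞} ρ(I,t)`. -/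
noncomputable def asymResurgence' {R : Type*} [CommRing R] (I : Ideal R) (sp : ℕ → Ideal R) : ℝ :=
  Filter.limsup (resurgenceFrom I sp) Filter.atTop

/-- The ideal of the `i`-th coordinate line in `P^{2s−1}` (written with 0-indexed
coordinates): the ideal generated by all the variables `x_j` with `j ∉ {2i, 2i+1}`. -/
noncomputable def coordLineIdeal (k : Type*) [Field k] (s : ℕ) (i : Fin s) :
    Ideal (MvPolynomial (Fin (2 * s)) k) :=
  Ideal.span (MvPolynomial.X ''
    {j : Fin (2 * s) | (j : ℕ) ≠ 2 * (i : ℕ) ∧ (j : ℕ) ≠ 2 * (i : ℕ) + 1})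

/-- The `m`-th symbolic power `I^(m) = I(L_1)^m ∩ … ∩ I(L_s)^m` of the ideal of the union
of the `s` disjoint coordinate lines of `P^{2s−1}`. -/
noncomputable def coordLinesSymb (k : Type*) [Field k] (s : ℕ) (m : ℕ) :
    Ideal (MvPolynomial (Fin (2 * s)) k) :=
  ⨅ i : Fin s, coordLineIdeal k s i ^ m

/-- The ideal of the `i`-th coordinate point of `P^{s−1}`: generated by all variables
`y_j` with `j ≠ i`. -/
noncomputable def coordPointIdeal (k : Type*) [Field k] (s : ℕ) (i : Fin s) :
    Ideal (MvPolynomial (Fin s) k) :=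
  Ideal.span (MvPolynomial.X '' {j : Fin s | j ≠ i})

namespace Stmt13Aux

variable {k : Type*} [Field k] {σ : Type*} [Fintype σ] [DecidableEq σ]

lemma span_monomial_pow (S : Set (σ →₀ ℕ)) (r : ℕ) :
    (Ideal.span ((fun e => monomial e (1:k)) '' S)) ^ r =
      Ideal.span ((fun e => monomial e (1:k)) ''
        {d | ∃ c : Fin r → (σ →₀ ℕ), (∀ t, c t ∈ S) ∧ d = ∑ t, c t}) := by
  induction r with
  | zero =>
      simp only [pow_zero, Ideal.one_eq_top]
      symm
      rw [Ideal.eq_top_iff_one]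
      apply Ideal.subset_span
      refine ⟨0, ⟨fun t => t.elim0, fun t => t.elim0, by simp⟩, by simp⟩
  | succ r ih =>
      rw [pow_succ, ih, Ideal.span_mul_span']
      congr 1
      ext f
      constructor
      · rintro ⟨_, ⟨d, ⟨c, hc, rfl⟩, rfl⟩, _, ⟨e, he, rfl⟩, rfl⟩
        refine ⟨(∑ t, c t) + e, ⟨Fin.snoc c e, fun t => ?_, ?_⟩, ?_⟩
        · refine Fin.lastCases ?_ ?_ t
          · simpa using he
          · intro t'; simpa using hc t'
        · rw [Fin.sum_univ_castSucc]; simp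
        · simp [monomial_mul]
      · rintro ⟨d, ⟨c, hc, rfl⟩, rfl⟩
        refine ⟨monomial (∑ t : Fin r, c t.castSucc) 1,
          ⟨_, ⟨fun t => c t.castSucc, fun t => hc _, rfl⟩, rfl⟩,
          monomial (c (Fin.last r)) 1, ⟨_, hc _, rfl⟩, ?_⟩
        simp [monomial_mul, ← Fin.sum_univ_castSucc]

lemma exists_le_sum_single {T : Finset σ} :
    ∀ (m : ℕ) (d : σ →₀ ℕ), m ≤ ∑ j ∈ T, d j →
      ∃ c : Fin m → σ, (∀ t, c t ∈ T) ∧ (∑ t, Finsupp.single (c t) 1) ≤ d := by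
  intro m
  induction m with
  | zero =>
      intro d _
      exact ⟨fun t => t.elim0, fun t => t.elim0, by
        simp only [Finset.univ_eq_empty, Finset.sum_empty]
        exact zero_le⟩
  | succ m ih =>
      intro d hd
      have hj : ∃ j ∈ T, d j ≠ 0 := by
        by_contra h
        push_neg at h
        have : ∑ j ∈ T, d j = 0 := Finset.sum_eq_zero fun j hjT => h j hjT
        omega
      obtain ⟨j, hjT, hj0⟩ := hj
      set d' : σ →₀ ℕ := d - Finsupp.single j 1 with hd'
      have hdapp : ∀ x, d' x = d x - (Finsupp.single j 1) x := fun x => Finsupp.tsub_apply _ _ _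
      have hsum : m ≤ ∑ j' ∈ T, d' j' := by
        have h1 : ∑ j' ∈ T, d j' = d j + ∑ j' ∈ T.erase j, d j' :=
          (Finset.add_sum_erase T _ hjT).symm
        have h2 : ∑ j' ∈ T, d' j' = d' j + ∑ j' ∈ T.erase j, d' j' :=
          (Finset.add_sum_erase T _ hjT).symm
        have h3 : ∑ j' ∈ T.erase j, d' j' = ∑ j' ∈ T.erase j, d j' := by
          apply Finset.sum_congr rfl
          intro x hx
          have hxj : x ≠ j := Finset.ne_of_mem_erase hx
          rw [hdapp, Finsupp.single_apply, if_neg (fun h => hxj h.symm)]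
          omega
        have h4 : d' j = d j - 1 := by
          rw [hdapp, Finsupp.single_apply, if_pos rfl]
        omega
      obtain ⟨c, hcT, hc⟩ := ih d' hsum
      refine ⟨(Fin.cons j c : Fin (m+1) → σ), fun t => ?_, ?_⟩
      · exact Fin.cases (motive := fun t => (Fin.cons j c : Fin (m+1) → σ) t ∈ T) hjT
          (fun i => by simp only [Fin.cons_succ]; exact hcT i) t
      · rw [Fin.sum_univ_succ]
        simp only [Fin.cons_zero, Fin.cons_succ]
        rw [Finsupp.le_def]
        intro x
        have h1 := Finsupp.le_def.mp hc x
        rw [Finsupp.finset_sum_apply] at h1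
        rw [hdapp] at h1
        rw [Finsupp.add_apply, Finsupp.finset_sum_apply]
        have h2 : (Finsupp.single j 1 : σ →₀ ℕ) x ≤ d x := by
          rw [Finsupp.single_apply]
          split
          · next h => subst h; omega
          · omega
        omega

lemma mem_span_X_pow {T : Finset σ} {m : ℕ} {f : MvPolynomial σ k} :
    f ∈ (Ideal.span (X '' (T : Set σ)) : Ideal (MvPolynomial σ k)) ^ m ↔
      ∀ d ∈ f.support, m ≤ ∑ j ∈ T, d j := by
  have hX : (X '' (T : Set σ) : Set (MvPolynomial σ k)) =
      (fun e => monomial e (1:k)) '' ((fun j => Finsupp.single j 1) '' (T : Set σ)) := by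
    rw [Set.image_image]
    rfl
  rw [hX, span_monomial_pow, mem_ideal_span_monomial_image]
  constructor
  · intro h d hd
    obtain ⟨e, ⟨c, hc, rfl⟩, hed⟩ := h d hd
    choose g hgT hg using fun t => hc t
    have h1 : ∀ t : Fin m, ∑ j ∈ T, (c t) j = 1 := by
      intro t
      rw [← hg t]
      simp only [Finsupp.single_apply]
      rw [Finset.sum_ite_eq T (g t) fun _ => 1, if_pos (by exact_mod_cast hgT t)]
    have h2 : ∑ j ∈ T, (∑ t : Fin m, c t) j ≤ ∑ j ∈ T, d j :=
      Finset.sum_le_sum fun j _ => Finsupp.le_def.mp hed j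
    have h3 : ∑ j ∈ T, (∑ t : Fin m, c t) j = m := by
      simp only [Finsupp.finset_sum_apply]
      rw [Finset.sum_comm]
      simp [h1]
    omega
  · intro h d hd
    obtain ⟨c, hcT, hc⟩ := exists_le_sum_single m d (h d hd)
    exact ⟨∑ t, Finsupp.single (c t) 1,
      ⟨fun t => Finsupp.single (c t) 1, fun t => ⟨c t, hcT t, rfl⟩, rfl⟩, hc⟩

variable {ι : Type*}

lemma iInf_span_eq (T : ι → Finset σ) :
    (⨅ i, Ideal.span (X '' ((T i : Finset σ) : Set σ)) : Ideal (MvPolynomial σ k)) =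
      Ideal.span ((fun e => monomial e (1:k)) '' {d | ∀ i, ∃ j ∈ T i, d j ≠ 0}) := by
  classical
  apply le_antisymm
  · intro f hf
    rw [mem_ideal_span_monomial_image]
    intro d hd
    refine ⟨d, fun i => ?_, le_refl d⟩
    obtain ⟨j, hj1, hj2⟩ := mem_ideal_span_X_image.mp (Ideal.mem_iInf.mp hf i) d hd
    exact ⟨j, by exact_mod_cast hj1, hj2⟩
  · rw [Ideal.span_le]
    rintro _ ⟨d, hd, rfl⟩
    rw [SetLike.mem_coe, Ideal.mem_iInf]
    intro i
    rw [mem_ideal_span_X_image]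
    intro d' hd'
    rw [support_monomial, if_neg (one_ne_zero)] at hd'
    rw [Finset.mem_singleton] at hd'
    subst hd'
    obtain ⟨j, hj1, hj2⟩ := hd i
    exact ⟨j, by exact_mod_cast hj1, hj2⟩

lemma mem_iInf_span_pow {T : ι → Finset σ} {r : ℕ} {f : MvPolynomial σ k} :
    f ∈ (⨅ i, Ideal.span (X '' ((T i : Finset σ) : Set σ)) : Ideal (MvPolynomial σ k)) ^ r ↔
      ∀ d ∈ f.support, ∃ c : Fin r → (σ →₀ ℕ),
        (∀ t, ∀ i, ∃ j ∈ T i, c t j ≠ 0) ∧ ∑ t, c t ≤ d := by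
  rw [iInf_span_eq, span_monomial_pow, mem_ideal_span_monomial_image]
  constructor
  · intro h d hd
    obtain ⟨e, ⟨c, hc, rfl⟩, hed⟩ := h d hd
    exact ⟨c, hc, hed⟩
  · intro h d hd
    obtain ⟨c, hc, hle⟩ := h d hd
    exact ⟨∑ t, c t, ⟨c, hc, rfl⟩, hle⟩

lemma mem_iInf_span_pow' {T : ι → Finset σ} {m : ℕ} {f : MvPolynomial σ k} :
    f ∈ (⨅ i, (Ideal.span (X '' ((T i : Finset σ) : Set σ)) : Ideal (MvPolynomial σ k)) ^ m) ↔
      ∀ d ∈ f.support, ∀ i, m ≤ ∑ j ∈ T i, d j := by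
  rw [Ideal.mem_iInf]
  constructor
  · intro h d hd i
    exact mem_span_X_pow.mp (h i) d hd
  · intro h i
    rw [mem_span_X_pow]
    intro d hd
    exact h d hd i

lemma contain_iff (T : ι → Finset σ) (m r : ℕ) :
    (⨅ i, (Ideal.span (X '' ((T i : Finset σ) : Set σ)) : Ideal (MvPolynomial σ k)) ^ m) ≤
      (⨅ i, Ideal.span (X '' ((T i : Finset σ) : Set σ))) ^ r ↔
      ∀ a : σ →₀ ℕ, (∀ i, m ≤ ∑ j ∈ T i, a j) →
        ∃ c : Fin r → (σ →₀ ℕ), (∀ t, ∀ i, ∃ j ∈ T i, c t j ≠ 0) ∧ ∑ t, c t ≤ a := by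
  classical
  constructor
  · intro h a ha
    have hmem : (monomial a (1:k)) ∈
        (⨅ i, (Ideal.span (X '' ((T i : Finset σ) : Set σ)) : Ideal (MvPolynomial σ k)) ^ m) := by
      rw [mem_iInf_span_pow']
      intro d hd i
      rw [support_monomial, if_neg (one_ne_zero), Finset.mem_singleton] at hd
      subst hd
      exact ha i
    have := mem_iInf_span_pow.mp (h hmem) a
      (by rw [support_monomial, if_neg (one_ne_zero)]; exact Finset.mem_singleton_self a)
    exact this
  · intro h f hf
    rw [mem_iInf_span_pow]
    intro d hd
    exact h d (mem_iInf_span_pow'.mp hf d hd)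

-- pairing combinatorics
variable {s : ℕ}

def lo (s : ℕ) (i : Fin s) : Fin (2*s) := ⟨2*i, by have := i.isLt; omega⟩
def hi (s : ℕ) (i : Fin s) : Fin (2*s) := ⟨2*i+1, by have := i.isLt; omega⟩
def hf (s : ℕ) (j : Fin (2*s)) : Fin s := ⟨(j : ℕ)/2, by have := j.isLt; omega⟩

lemma lo_val (i : Fin s) : ((lo s i : Fin (2*s)) : ℕ) = 2*i := rfl
lemma hi_val (i : Fin s) : ((hi s i : Fin (2*s)) : ℕ) = 2*i+1 := rfl
lemma hf_val (j : Fin (2*s)) : ((hf s j : Fin s) : ℕ) = (j:ℕ)/2 := rfl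
lemma hf_lo (i : Fin s) : hf s (lo s i) = i := by
  apply Fin.ext; rw [hf_val, lo_val]; omega
lemma hf_hi (i : Fin s) : hf s (hi s i) = i := by
  apply Fin.ext; rw [hf_val, hi_val]; omega
lemma lo_ne_hi (i : Fin s) : lo s i ≠ hi s i := by
  intro h
  have := congrArg (Fin.val) h
  rw [lo_val, hi_val] at this; omega
lemma eq_lo_or_hi (j : Fin (2*s)) : j = lo s (hf s j) ∨ j = hi s (hf s j) := by
  rcases Nat.even_or_odd (j : ℕ) with h | h
  · left; apply Fin.ext; rw [lo_val, hf_val]; obtain ⟨c, hc⟩ := h; omega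
  · right; apply Fin.ext; rw [hi_val, hf_val]; obtain ⟨c, hc⟩ := h; omega

lemma lo_injective : Function.Injective (lo s) := fun i i' h => by
  apply Fin.ext
  have := congrArg (Fin.val) h
  rw [lo_val, lo_val] at this; omega
lemma hi_injective : Function.Injective (hi s) := fun i i' h => by
  apply Fin.ext
  have := congrArg (Fin.val) h
  rw [hi_val, hi_val] at this; omega

lemma sum_univ_pair (F : Fin (2*s) → ℕ) :
    ∑ j, F j = ∑ i : Fin s, (F (lo s i) + F (hi s i)) := by
  classical
  rw [Finset.sum_add_distrib]
  have hl : ∑ i : Fin s, F (lo s i) = ∑ j ∈ Finset.univ.image (lo s), F j :=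
    (Finset.sum_image (fun x _ y _ h => lo_injective h)).symm
  have hh : ∑ i : Fin s, F (hi s i) = ∑ j ∈ Finset.univ.image (hi s), F j :=
    (Finset.sum_image (fun x _ y _ h => hi_injective h)).symm
  rw [hl, hh, ← Finset.sum_union]
  · apply Finset.sum_congr _ (fun _ _ => rfl)
    symm
    rw [Finset.eq_univ_iff_forall]
    intro j
    rw [Finset.mem_union, Finset.mem_image, Finset.mem_image]
    rcases eq_lo_or_hi j with h | h
    · exact Or.inl ⟨hf s j, Finset.mem_univ _, h.symm⟩
    · exact Or.inr ⟨hf s j, Finset.mem_univ _, h.symm⟩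
  · rw [Finset.disjoint_left]
    intro a ha hb
    rw [Finset.mem_image] at ha hb
    obtain ⟨i, _, rfl⟩ := ha
    obtain ⟨i', _, h⟩ := hb
    have := congrArg (Fin.val) h
    rw [lo_val, hi_val] at this; omega

noncomputable def pairSum (s : ℕ) (a : Fin (2*s) →₀ ℕ) : Fin s →₀ ℕ :=
  Finsupp.equivFunOnFinite.symm (fun i => a (lo s i) + a (hi s i))

lemma pairSum_apply (a : Fin (2*s) →₀ ℕ) (i : Fin s) :
    pairSum s a i = a (lo s i) + a (hi s i) := rfl

lemma sum_Tx (a : Fin (2*s) →₀ ℕ) (i : Fin s) :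
    ∑ j ∈ ({lo s i, hi s i}ᶜ : Finset (Fin (2*s))), a j =
      ∑ i' ∈ ({i}ᶜ : Finset (Fin s)), pairSum s a i' := by
  classical
  have h1 : ∑ j ∈ ({lo s i, hi s i}ᶜ : Finset (Fin (2*s))), a j
      + ∑ j ∈ ({lo s i, hi s i} : Finset (Fin (2*s))), a j = ∑ j, a j :=
    Finset.sum_compl_add_sum _ _
  have h1' : ∑ j ∈ ({lo s i, hi s i} : Finset (Fin (2*s))), a j = a (lo s i) + a (hi s i) :=
    Finset.sum_pair (lo_ne_hi i)
  have h2 : ∑ i' ∈ ({i}ᶜ : Finset (Fin s)), pairSum s a i'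
      + ∑ i' ∈ ({i} : Finset (Fin s)), pairSum s a i' = ∑ i', pairSum s a i' :=
    Finset.sum_compl_add_sum _ _
  have h2' : ∑ i' ∈ ({i} : Finset (Fin s)), pairSum s a i' = pairSum s a i :=
    Finset.sum_singleton _ _
  have h3 : ∑ j, a j = ∑ i', pairSum s a i' := by
    rw [sum_univ_pair (fun j => a j)]
    exact Finset.sum_congr rfl (fun i' _ => (pairSum_apply a i').symm)
  have h4 := pairSum_apply a i
  omega

lemma lift_le (a : Fin (2*s) →₀ ℕ) (e : Fin s →₀ ℕ) (he : e ≤ pairSum s a) :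
    ∃ c : Fin (2*s) →₀ ℕ, c ≤ a ∧ pairSum s c = e := by
  set g : Fin (2*s) → ℕ := fun j => if (j:ℕ) % 2 = 0 then min (e (hf s j)) (a j)
    else e (hf s j) - min (e (hf s j)) (a (lo s (hf s j))) with hg
  refine ⟨Finsupp.equivFunOnFinite.symm g, ?_, ?_⟩
  · rw [Finsupp.le_def]
    intro j
    have hcj : (Finsupp.equivFunOnFinite.symm g) j = g j := rfl
    rw [hcj, hg]
    have hej := Finsupp.le_def.mp he (hf s j)
    rw [pairSum_apply] at hej
    rcases eq_lo_or_hi j with h | h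
    · have hv : (j:ℕ) % 2 = 0 := by
        have := congrArg Fin.val h; rw [lo_val] at this; omega
      simp only [if_pos hv]
      exact min_le_right _ _
    · have hv : ¬ ((j:ℕ) % 2 = 0) := by
        have := congrArg Fin.val h; rw [hi_val] at this; omega
      simp only [if_neg hv]
      have haj : a j = a (hi s (hf s j)) := by rw [← h]
      set M := min (e (hf s j)) (a (lo s (hf s j))) with hM
      have h1 : M ≤ e (hf s j) := min_le_left _ _
      have h2 : M ≤ a (lo s (hf s j)) := min_le_right _ _
      have h3 : M = e (hf s j) ∨ M = a (lo s (hf s j)) := min_choice _ _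
      omega
  · apply Finsupp.ext
    intro i
    rw [pairSum_apply]
    have h1 : (Finsupp.equivFunOnFinite.symm g) (lo s i) = min (e i) (a (lo s i)) := by
      have : g (lo s i) = min (e i) (a (lo s i)) := by
        rw [hg]
        simp only
        rw [if_pos (by rw [lo_val]; omega), hf_lo]
      exact this
    have h2 : (Finsupp.equivFunOnFinite.symm g) (hi s i)
        = e i - min (e i) (a (lo s i)) := by
      have : g (hi s i) = e i - min (e i) (a (lo s i)) := by
        rw [hg]
        simp only
        rw [if_neg (by rw [hi_val]; omega), hf_hi]
      exact this
    rw [h1, h2]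
    have h3 : min (e i) (a (lo s i)) ≤ e i := min_le_left _ _
    omega

lemma lift_family : ∀ (r : ℕ) (e : Fin r → (Fin s →₀ ℕ)) (a : Fin (2*s) →₀ ℕ),
    (∑ t, e t) ≤ pairSum s a →
    ∃ c : Fin r → (Fin (2*s) →₀ ℕ), (∀ t, pairSum s (c t) = e t) ∧ ∑ t, c t ≤ a := by
  intro r
  induction r with
  | zero =>
      intro e a _
      refine ⟨fun t => t.elim0, fun t => t.elim0, ?_⟩
      simp only [Finset.univ_eq_empty, Finset.sum_empty]
      exact zero_le
  | succ r ih =>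
      intro e a he
      have he0 : e 0 ≤ pairSum s a := by
        refine le_trans ?_ he
        exact Finset.single_le_sum (f := e) (fun t _ => zero_le) (Finset.mem_univ 0)
      obtain ⟨c0, hc0a, hc0⟩ := lift_le a (e 0) he0
      have htail : (∑ t : Fin r, e t.succ) ≤ pairSum s (a - c0) := by
        rw [Finsupp.le_def]
        intro i
        have h1 := Finsupp.le_def.mp he i
        rw [Fin.sum_univ_succ, Finsupp.add_apply] at h1
        have h2 : pairSum s (a - c0) i = pairSum s a i - pairSum s c0 i := by
          rw [pairSum_apply, pairSum_apply, pairSum_apply,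
            Finsupp.tsub_apply, Finsupp.tsub_apply]
          have := Finsupp.le_def.mp hc0a (lo s i)
          have := Finsupp.le_def.mp hc0a (hi s i)
          omega
        rw [h2, hc0]
        rw [Finsupp.finset_sum_apply] at h1 ⊢
        omega
      obtain ⟨c', hc'e, hc'⟩ := ih (fun t => e t.succ) (a - c0) htail
      refine ⟨(Fin.cons c0 c' : Fin (r+1) → (Fin (2*s) →₀ ℕ)), fun t => ?_, ?_⟩
      · exact Fin.cases (motive := fun t =>
          pairSum s ((Fin.cons c0 c' : Fin (r+1) → (Fin (2*s) →₀ ℕ)) t) = e t) hc0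
          (fun t' => by simp only [Fin.cons_succ]; exact hc'e t') t
      · rw [Fin.sum_univ_succ]
        simp only [Fin.cons_zero, Fin.cons_succ]
        rw [Finsupp.le_def]
        intro j
        have h1 := Finsupp.le_def.mp hc' j
        rw [Finsupp.tsub_apply] at h1
        have h2 := Finsupp.le_def.mp hc0a j
        rw [Finsupp.add_apply]
        omega

noncomputable def liftLo (s : ℕ) (b : Fin s →₀ ℕ) : Fin (2*s) →₀ ℕ :=
  Finsupp.equivFunOnFinite.symm (fun j => if (j:ℕ) % 2 = 0 then b (hf s j) else 0)

lemma pairSum_liftLo (b : Fin s →₀ ℕ) : pairSum s (liftLo s b) = b := by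
  apply Finsupp.ext
  intro i
  rw [pairSum_apply]
  have h1 : (liftLo s b) (lo s i) = b i := by
    show (if ((lo s i : Fin (2*s)) : ℕ) % 2 = 0 then b (hf s (lo s i)) else 0) = b i
    rw [if_pos (by rw [lo_val]; omega), hf_lo]
  have h2 : (liftLo s b) (hi s i) = 0 := by
    show (if ((hi s i : Fin (2*s)) : ℕ) % 2 = 0 then b (hf s (hi s i)) else 0) = 0
    rw [if_neg (by rw [hi_val]; omega)]
  omega

lemma xcond_to_ycond {c : Fin (2*s) →₀ ℕ}
    (h : ∀ i : Fin s, ∃ j ∈ ({lo s i, hi s i}ᶜ : Finset (Fin (2*s))), c j ≠ 0) :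
    ∀ i : Fin s, ∃ i' ∈ ({i}ᶜ : Finset (Fin s)), pairSum s c i' ≠ 0 := by
  intro i
  obtain ⟨j, hjmem, hj⟩ := h i
  rw [Finset.mem_compl, Finset.mem_insert, Finset.mem_singleton, not_or] at hjmem
  refine ⟨hf s j, ?_, ?_⟩
  · rw [Finset.mem_compl, Finset.mem_singleton]
    intro hcontr
    rcases eq_lo_or_hi j with hh | hh
    · exact hjmem.1 (by rw [hh, hcontr])
    · exact hjmem.2 (by rw [hh, hcontr])
  · rw [pairSum_apply]
    rcases eq_lo_or_hi j with hh | hh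
    · rw [← hh]; omega
    · rw [← hh]; omega

lemma ycond_to_xcond {c : Fin (2*s) →₀ ℕ} {e : Fin s →₀ ℕ} (hc : pairSum s c = e)
    (h : ∀ i : Fin s, ∃ i' ∈ ({i}ᶜ : Finset (Fin s)), e i' ≠ 0) :
    ∀ i : Fin s, ∃ j ∈ ({lo s i, hi s i}ᶜ : Finset (Fin (2*s))), c j ≠ 0 := by
  intro i
  obtain ⟨i', hi'mem, hi'⟩ := h i
  rw [Finset.mem_compl, Finset.mem_singleton] at hi'mem
  have hvne : (i' : ℕ) ≠ (i : ℕ) := fun hh => hi'mem (Fin.ext hh)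
  have hsum : c (lo s i') + c (hi s i') ≠ 0 := by
    rw [← pairSum_apply, hc]; exact hi'
  rcases Nat.eq_zero_or_pos (c (lo s i')) with h0 | h0
  · refine ⟨hi s i', ?_, by omega⟩
    rw [Finset.mem_compl, Finset.mem_insert, Finset.mem_singleton, not_or]
    refine ⟨fun hh => ?_, fun hh => ?_⟩
    · have := congrArg Fin.val hh; rw [hi_val, lo_val] at this; omega
    · have := congrArg Fin.val hh; rw [hi_val, hi_val] at this; omega
  · refine ⟨lo s i', ?_, by omega⟩
    rw [Finset.mem_compl, Finset.mem_insert, Finset.mem_singleton, not_or]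
    refine ⟨fun hh => ?_, fun hh => ?_⟩
    · have := congrArg Fin.val hh; rw [lo_val, lo_val] at this; omega
    · have := congrArg Fin.val hh; rw [lo_val, hi_val] at this; omega

lemma pairSum_sum {r : ℕ} (c : Fin r → (Fin (2*s) →₀ ℕ)) :
    pairSum s (∑ t, c t) = ∑ t, pairSum s (c t) := by
  apply Finsupp.ext
  intro i
  rw [pairSum_apply, Finsupp.finset_sum_apply, Finsupp.finset_sum_apply,
    Finsupp.finset_sum_apply]
  rw [← Finset.sum_add_distrib]
  exact Finset.sum_congr rfl fun t _ => (pairSum_apply (c t) i).symm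

lemma pairSum_mono {a a' : Fin (2*s) →₀ ℕ} (h : a ≤ a') : pairSum s a ≤ pairSum s a' := by
  rw [Finsupp.le_def]
  intro i
  rw [pairSum_apply, pairSum_apply]
  have h1 := Finsupp.le_def.mp h (lo s i)
  have h2 := Finsupp.le_def.mp h (hi s i)
  omega

/-- The monomial-level equivalence between the two containment problems. -/
lemma main_iff (m r : ℕ) :
    ((∀ a : Fin (2*s) →₀ ℕ,
        (∀ i, m ≤ ∑ j ∈ ({lo s i, hi s i}ᶜ : Finset (Fin (2*s))), a j) →
        ∃ c : Fin r → (Fin (2*s) →₀ ℕ),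
          (∀ t, ∀ i, ∃ j ∈ ({lo s i, hi s i}ᶜ : Finset (Fin (2*s))), c t j ≠ 0) ∧
          ∑ t, c t ≤ a) ↔
      (∀ b : Fin s →₀ ℕ,
        (∀ i, m ≤ ∑ j ∈ ({i}ᶜ : Finset (Fin s)), b j) →
        ∃ e : Fin r → (Fin s →₀ ℕ),
          (∀ t, ∀ i, ∃ j ∈ ({i}ᶜ : Finset (Fin s)), e t j ≠ 0) ∧
          ∑ t, e t ≤ b)) := by
  constructor
  · intro H b hb
    obtain ⟨c, hcond, hle⟩ := H (liftLo s b) (fun i => by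
      rw [sum_Tx, pairSum_liftLo]; exact hb i)
    refine ⟨fun t => pairSum s (c t), fun t => xcond_to_ycond (hcond t), ?_⟩
    rw [← pairSum_sum]
    have := pairSum_mono hle
    rwa [pairSum_liftLo] at this
  · intro H a ha
    obtain ⟨e, hcond, hle⟩ := H (pairSum s a) (fun i => by
      rw [← sum_Tx]; exact ha i)
    obtain ⟨c, hc, hcle⟩ := lift_family r e a hle
    exact ⟨c, fun t => ycond_to_xcond (hc t) (hcond t), hcle⟩

end Stmt13Aux

/-- Comparing the ideal `I` of the `s` disjoint coordinate lines of `P^{2s−1}` with the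
ideal `J` of the `s` coordinate points of `P^{s−1}`: `I^(m) ⊆ I^r` iff `J^(m) ⊆ J^r`, for all
positive integers `m, r`; consequently `ρ(I) = ρ(J)`. -/
theorem statement13 {k : Type*} [Field k] {s : ℕ} (hs : 2 ≤ s)
    (I : Ideal (MvPolynomial (Fin (2 * s)) k)) (hI : I = ⨅ i : Fin s, coordLineIdeal k s i)
    (J : Ideal (MvPolynomial (Fin s) k)) (hJ : J = ⨅ i : Fin s, coordPointIdeal k s i) :
    (∀ m r : ℕ, 0 < m → 0 < r →
      (coordLinesSymb k s m ≤ I ^ r ↔ (⨅ i : Fin s, coordPointIdeal k s i ^ m) ≤ J ^ r)) ∧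
    resurgence I (coordLinesSymb k s) =
      resurgence J (fun m => ⨅ i : Fin s, coordPointIdeal k s i ^ m) := by
  have hline : ∀ i : Fin s, coordLineIdeal k s i =
      Ideal.span (X '' (((({Stmt13Aux.lo s i, Stmt13Aux.hi s i}ᶜ : Finset (Fin (2*s)))) : Set (Fin (2*s))))) := by
    intro i
    have hset : {j : Fin (2 * s) | (j : ℕ) ≠ 2 * (i : ℕ) ∧ (j : ℕ) ≠ 2 * (i : ℕ) + 1} =
        ((({Stmt13Aux.lo s i, Stmt13Aux.hi s i}ᶜ : Finset (Fin (2*s)))) : Set (Fin (2*s))) := by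
      ext j
      simp only [Set.mem_setOf_eq, Finset.coe_compl, Set.mem_compl_iff, Finset.mem_coe,
        Finset.mem_insert, Finset.mem_singleton, not_or]
      constructor
      · rintro ⟨h1, h2⟩
        exact ⟨fun hh => h1 (by rw [hh, Stmt13Aux.lo_val]),
          fun hh => h2 (by rw [hh, Stmt13Aux.hi_val])⟩
      · rintro ⟨h1, h2⟩
        exact ⟨fun hh => h1 (Fin.ext (by rw [Stmt13Aux.lo_val]; exact hh)),
          fun hh => h2 (Fin.ext (by rw [Stmt13Aux.hi_val]; exact hh))⟩
    simp only [coordLineIdeal, hset]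
  have hpoint : ∀ i : Fin s, coordPointIdeal k s i =
      Ideal.span (X '' ((({i}ᶜ : Finset (Fin s))) : Set (Fin s))) := by
    intro i
    have hset : {j : Fin s | j ≠ i} = ((({i}ᶜ : Finset (Fin s))) : Set (Fin s)) := by
      ext j; simp
    simp only [coordPointIdeal, hset]
  have key : ∀ m r : ℕ,
      (coordLinesSymb k s m ≤ I ^ r ↔ (⨅ i : Fin s, coordPointIdeal k s i ^ m) ≤ J ^ r) := by
    intro m r
    have e1 : coordLinesSymb k s m =
        ⨅ i : Fin s, (Ideal.span (X '' (((({Stmt13Aux.lo s i, Stmt13Aux.hi s i}ᶜ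
          : Finset (Fin (2*s)))) : Set (Fin (2*s))))) : Ideal (MvPolynomial (Fin (2*s)) k)) ^ m := by
      simp only [coordLinesSymb]
      exact iInf_congr fun i => by rw [hline i]
    have e2 : I = ⨅ i : Fin s, (Ideal.span (X '' (((({Stmt13Aux.lo s i, Stmt13Aux.hi s i}ᶜ
          : Finset (Fin (2*s)))) : Set (Fin (2*s))))) : Ideal (MvPolynomial (Fin (2*s)) k)) := by
      rw [hI]; exact iInf_congr fun i => hline i
    have e3 : (⨅ i : Fin s, coordPointIdeal k s i ^ m) =
        ⨅ i : Fin s, (Ideal.span (X '' ((({i}ᶜ : Finset (Fin s))) : Set (Fin s)))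
          : Ideal (MvPolynomial (Fin s) k)) ^ m :=
      iInf_congr fun i => by rw [hpoint i]
    have e4 : J = ⨅ i : Fin s, (Ideal.span (X '' ((({i}ᶜ : Finset (Fin s))) : Set (Fin s)))
          : Ideal (MvPolynomial (Fin s) k)) := by
      rw [hJ]; exact iInf_congr fun i => hpoint i
    rw [e1, e2, e3, e4,
      Stmt13Aux.contain_iff (fun i : Fin s => ({Stmt13Aux.lo s i, Stmt13Aux.hi s i}ᶜ
        : Finset (Fin (2*s)))) m r,
      Stmt13Aux.contain_iff (fun i : Fin s => ({i}ᶜ : Finset (Fin s))) m r]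
    exact Stmt13Aux.main_iff m r
  refine ⟨fun m r _ _ => key m r, ?_⟩
  unfold resurgence
  congr 1
  ext x
  constructor
  · rintro ⟨m, r, hm, hr, hne, rfl⟩
    exact ⟨m, r, hm, hr, fun hcontr => hne ((key m r).mpr hcontr), rfl⟩
  · rintro ⟨m, r, hm, hr, hne, rfl⟩
    exact ⟨m, r, hm, hr, fun hcontr => hne ((key m r).mp hcontr), rfl⟩
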